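/- (Powers–Størmer inequality) For positive semidefinite real symmetric matrices X, Y, ‖√X − √Y‖_F² ≤ ‖X − Y‖_*, where √ denotes the PSD matrix square root, ‖·‖_F the Frobenius norm, and ‖·‖_* the nuclear (trace) norm. -/

import Mathlib

open Matrix

/-- The positive semidefinite square root of a positive semidefinite matrix
(the Mathlib definition of December 2024, since removed). -/
noncomputable def Matrix.PosSemidef.sqrt {n 𝕜 : Type*} [Fintype n] [RCLike 𝕜] [PartialOrder 𝕜] [DecidableEq n]
    {A : Matrix n n 𝕜} (hA : A.PosSemidef) : Matrix n n 𝕜 :=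
  hA.1.eigenvectorUnitary.1 * diagonal ((↑) ∘ (√·) ∘ hA.1.eigenvalues) *
  (star hA.1.eigenvectorUnitary : Matrix n n 𝕜)

/-- Squared Frobenius norm of a real matrix. -/
noncomputable def frobSq {m n : ℕ} (A : Matrix (Fin m) (Fin n) ℝ) : ℝ :=
  ∑ i, ∑ j, (A i j) ^ 2

/-- Frobenius norm. -/
noncomputable def frobNorm {m n : ℕ} (A : Matrix (Fin m) (Fin n) ℝ) : ℝ :=
  Real.sqrt (frobSq A)

lemma wwT_posSemidef {m n : ℕ} (W : Matrix (Fin m) (Fin n) ℝ) :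
    (W * Wᵀ).PosSemidef := by
  simpa [Matrix.conjTranspose_eq_transpose_of_trivial] using
    W.posSemidef_self_mul_conjTranspose

/-- Nuclear norm: trace of the PSD square root of `W * Wᵀ`. -/
noncomputable def nuclearNorm {m n : ℕ} (W : Matrix (Fin m) (Fin n) ℝ) : ℝ :=
  (wwT_posSemidef W).sqrt.trace

section SqrtBridge

open scoped MatrixOrder

lemma Matrix.PosSemidef.sqrt_eq_cfcSqrt {n : ℕ} {A : Matrix (Fin n) (Fin n) ℝ}
    (hA : A.PosSemidef) : hA.sqrt = CFC.sqrt A := by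
  have hA0 : 0 ≤ A := hA.nonneg
  rw [CFC.sqrt_eq_cfc, cfc_nnreal_eq_real _ A, hA.1.cfc_eq]
  simp only [IsHermitian.cfc, Matrix.PosSemidef.sqrt, Unitary.conjStarAlgAut_apply]
  congr 3
  funext i
  simp [Real.coe_sqrt, Real.coe_toNNReal', max_eq_left (hA.eigenvalues_nonneg i)]

lemma Matrix.PosSemidef.posSemidef_sqrt {n : ℕ} {A : Matrix (Fin n) (Fin n) ℝ}
    (hA : A.PosSemidef) : hA.sqrt.PosSemidef := by
  rw [hA.sqrt_eq_cfcSqrt]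
  exact (CFC.sqrt_nonneg A).posSemidef

lemma Matrix.PosSemidef.sqrt_mul_self {n : ℕ} {A : Matrix (Fin n) (Fin n) ℝ}
    (hA : A.PosSemidef) : hA.sqrt * hA.sqrt = A := by
  have hA0 : 0 ≤ A := hA.nonneg
  rw [hA.sqrt_eq_cfcSqrt]
  exact CFC.sqrt_mul_sqrt_self A

lemma Matrix.PosSemidef.eq_sqrt_of_sq_eq {n : ℕ} {A B : Matrix (Fin n) (Fin n) ℝ}
    (hB : B.PosSemidef) (hA : A.PosSemidef) (h : B ^ 2 = A) : B = hA.sqrt := by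
  have hA0 : 0 ≤ A := hA.nonneg
  have hB0 : 0 ≤ B := hB.nonneg
  rw [hA.sqrt_eq_cfcSqrt, eq_comm, CFC.sqrt_eq_iff A B, ← sq, h]

end SqrtBridge

lemma psd_diag_nonneg {n : ℕ} {M : Matrix (Fin n) (Fin n) ℝ} (hM : M.PosSemidef) (i : Fin n) :
    0 ≤ M i i := by
  exact hM.diag_nonneg

lemma frobSq_eq_trace {n : ℕ} (M : Matrix (Fin n) (Fin n) ℝ) : frobSq M = (M * Mᵀ).trace := by
  simp [frobSq, Matrix.trace, Matrix.mul_apply, sq, Matrix.diag]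

lemma trace_conj {n : ℕ} (V M : Matrix (Fin n) (Fin n) ℝ) (hV : V * star V = 1) :
    (star V * M * V).trace = M.trace := by
  rw [Matrix.trace_mul_cycle, hV, Matrix.one_mul]

lemma conj_mul_conj {n : ℕ} (V M N : Matrix (Fin n) (Fin n) ℝ) (hV : V * star V = 1) :
    (star V * M * V) * (star V * N * V) = star V * (M * N) * V := by
  have cancel : ∀ P : Matrix (Fin n) (Fin n) ℝ, V * (star V * P) = P := fun P => by
    rw [← Matrix.mul_assoc, hV, Matrix.one_mul]
  simp only [Matrix.mul_assoc, cancel]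

lemma conj_psd {n : ℕ} {M : Matrix (Fin n) (Fin n) ℝ} (hM : M.PosSemidef)
    (V : Matrix (Fin n) (Fin n) ℝ) : (star V * M * V).PosSemidef := by
  simpa [Matrix.star_eq_conjTranspose] using hM.conjTranspose_mul_mul_same V

/-- Powers–Størmer: for PSD real symmetric `X, Y`,
`‖√X − √Y‖_F² ≤ ‖X − Y‖_*`. -/
theorem powers_stormer {n : ℕ} (X Y : Matrix (Fin n) (Fin n) ℝ)
    (hX : X.PosSemidef) (hY : Y.PosSemidef) :
    frobSq (hX.sqrt - hY.sqrt) ≤ nuclearNorm (X - Y) := by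
  set A := hX.sqrt with hAdef
  set B := hY.sqrt with hBdef
  have hAps : A.PosSemidef := hX.posSemidef_sqrt
  have hBps : B.PosSemidef := hY.posSemidef_sqrt
  set D := A - B with hDdef
  set C := X - Y with hCdef
  have hD : D.IsHermitian := hAps.1.sub hBps.1
  have hC : C.IsHermitian := hX.1.sub hY.1
  have hA2 : A * A = X := hX.sqrt_mul_self
  have hB2 : B * B = Y := hY.sqrt_mul_self
  -- eigendecomposition of C, and the absolute value |C|
  set U : Matrix (Fin n) (Fin n) ℝ := (hC.eigenvectorUnitary : Matrix (Fin n) (Fin n) ℝ) with hUdef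
  set μ := hC.eigenvalues with hμdef
  have hUU : U * star U = 1 := mem_unitaryGroup_iff.mp hC.eigenvectorUnitary.2
  have hUU' : star U * U = 1 := mem_unitaryGroup_iff'.mp hC.eigenvectorUnitary.2
  have hCspec : C = U * diagonal μ * star U := by
    simpa [RCLike.ofReal_real_eq_id, Function.comp] using hC.spectral_theorem
  set absC : Matrix (Fin n) (Fin n) ℝ := U * diagonal (fun i => |μ i|) * star U with habsdef
  have habs_ps : absC.PosSemidef :=
    (Matrix.PosSemidef.diagonal (fun i => abs_nonneg (μ i))).mul_mul_conjTranspose_same U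
  have hCt : Cᵀ = C := by
    simpa [Matrix.conjTranspose_eq_transpose_of_trivial] using hC.eq
  have cancelU : ∀ P : Matrix (Fin n) (Fin n) ℝ, star U * (U * P) = P := fun P => by
    rw [← Matrix.mul_assoc, hUU', Matrix.one_mul]
  have habs_sq : absC ^ 2 = C * Cᵀ := by
    rw [hCt, pow_two, habsdef, hCspec]
    simp only [Matrix.mul_assoc, cancelU]
    congr 1
    rw [← Matrix.mul_assoc, ← Matrix.mul_assoc, Matrix.diagonal_mul_diagonal,
      Matrix.diagonal_mul_diagonal]
    congr 2
    funext i
    simp [abs_mul_abs_self]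
  have hsqrt : (wwT_posSemidef C).sqrt = absC :=
    (habs_ps.eq_sqrt_of_sq_eq (wwT_posSemidef C) habs_sq).symm
  have hnuc : nuclearNorm C = absC.trace := by rw [nuclearNorm, hsqrt]
  -- |C| ± C is PSD
  have habs_sub : (absC - C).PosSemidef := by
    have : absC - C = U * diagonal (fun i => |μ i| - μ i) * star U := by
      rw [habsdef, hCspec, ← Matrix.diagonal_sub]
      simp only [Matrix.sub_mul, Matrix.mul_sub]
    rw [this]
    exact (Matrix.PosSemidef.diagonal
      (fun i => sub_nonneg.mpr (le_abs_self (μ i)))).mul_mul_conjTranspose_same U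
  have habs_add : (absC + C).PosSemidef := by
    have : absC + C = U * diagonal (fun i => |μ i| + μ i) * star U := by
      rw [habsdef, hCspec, ← Matrix.diagonal_add]
      simp only [Matrix.add_mul, Matrix.mul_add]
    rw [this]
    exact (Matrix.PosSemidef.diagonal
      (fun i => by simp only [Pi.zero_apply]; linarith [neg_abs_le (μ i)])).mul_mul_conjTranspose_same U
  -- eigendecomposition of D
  set V : Matrix (Fin n) (Fin n) ℝ := (hD.eigenvectorUnitary : Matrix (Fin n) (Fin n) ℝ) with hVdef
  set lam := hD.eigenvalues with hlamdef
  have hVV : V * star V = 1 := mem_unitaryGroup_iff.mp hD.eigenvectorUnitary.2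
  have hVD : star V * D * V = diagonal lam := by
    have hVV' : star V * V = 1 := mem_unitaryGroup_iff'.mp hD.eigenvectorUnitary.2
    have hDspec : D = V * diagonal lam * star V := by
      simpa [RCLike.ofReal_real_eq_id, Function.comp] using hD.spectral_theorem
    rw [hDspec]
    simp only [Matrix.mul_assoc, hVV', Matrix.mul_one]
    rw [← Matrix.mul_assoc, hVV', Matrix.one_mul]
  have hDt : Dᵀ = D := by
    simpa [Matrix.conjTranspose_eq_transpose_of_trivial] using hD.eq
  -- frobSq D = ∑ lam i ^ 2
  have hfrob : frobSq D = ∑ i, lam i ^ 2 := by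
    rw [frobSq_eq_trace, hDt, ← trace_conj V (D * D) hVV, ← conj_mul_conj V D D hVV, hVD,
      Matrix.diagonal_mul_diagonal, Matrix.trace_diagonal]
    simp [sq]
  -- the key pointwise inequality
  set N : Matrix (Fin n) (Fin n) ℝ := star V * absC * V with hNdef
  set SAB : Matrix (Fin n) (Fin n) ℝ := star V * (A + B) * V with hSdef
  have hCAB : C = A * D + D * B := by rw [hCdef, hDdef, ← hA2, ← hB2]; noncomm_ring
  have hCVexp : star V * C * V = (star V * A * V) * diagonal lam + diagonal lam * (star V * B * V) := by
    rw [hCAB, show star V * (A * D + D * B) * V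
        = star V * (A * D) * V + star V * (D * B) * V from by
      simp only [Matrix.mul_add, Matrix.add_mul],
      ← conj_mul_conj V A D hVV, ← conj_mul_conj V D B hVV, hVD]
  have hSexp : SAB = star V * A * V + star V * B * V := by
    rw [hSdef]; simp only [Matrix.mul_add, Matrix.add_mul]
  have hCVdiag : ∀ i, (star V * C * V) i i = lam i * SAB i i := by
    intro i
    rw [hCVexp, hSexp]
    simp only [Matrix.add_apply, Matrix.mul_diagonal, Matrix.diagonal_mul]
    ring
  have h1 : ∀ i, lam i ≤ SAB i i := by
    intro i
    have hps : (SAB - diagonal lam).PosSemidef := by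
      rw [← hVD, show SAB - star V * D * V = star V * (B + B) * V from by
        rw [hSdef, hDdef]; noncomm_ring]
      exact conj_psd (hBps.add hBps) V
    have := psd_diag_nonneg hps i
    simp only [Matrix.sub_apply, Matrix.diagonal_apply_eq] at this
    linarith
  have h2 : ∀ i, -lam i ≤ SAB i i := by
    intro i
    have hps : (SAB + diagonal lam).PosSemidef := by
      rw [← hVD, show SAB + star V * D * V = star V * (A + A) * V from by
        rw [hSdef, hDdef]; noncomm_ring]
      exact conj_psd (hAps.add hAps) V
    have := psd_diag_nonneg hps i
    simp only [Matrix.add_apply, Matrix.diagonal_apply_eq] at this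
    linarith
  have hN1 : ∀ i, (star V * C * V) i i ≤ N i i := by
    intro i
    have hps : (N - star V * C * V).PosSemidef := by
      rw [show N - star V * C * V = star V * (absC - C) * V from by
        rw [hNdef]; simp only [Matrix.mul_sub, Matrix.sub_mul]]
      exact conj_psd habs_sub V
    have := psd_diag_nonneg hps i
    simp only [Matrix.sub_apply] at this
    linarith
  have hN2 : ∀ i, -((star V * C * V) i i) ≤ N i i := by
    intro i
    have hps : (N + star V * C * V).PosSemidef := by
      rw [show N + star V * C * V = star V * (absC + C) * V from by
        rw [hNdef]; simp only [Matrix.mul_add, Matrix.add_mul]]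
      exact conj_psd habs_add V
    have := psd_diag_nonneg hps i
    simp only [Matrix.add_apply] at this
    linarith
  have key : ∀ i, lam i ^ 2 ≤ N i i := by
    intro i
    have habsS : |lam i| ≤ SAB i i := abs_le.2 ⟨by linarith [h2 i], h1 i⟩
    have hSnn : 0 ≤ SAB i i := le_trans (abs_nonneg _) habsS
    calc lam i ^ 2 = |lam i| * |lam i| := by rw [← abs_mul, abs_mul_self, sq]
      _ ≤ |lam i| * SAB i i := mul_le_mul_of_nonneg_left habsS (abs_nonneg _)
      _ = |lam i * SAB i i| := by rw [abs_mul, abs_of_nonneg hSnn]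
      _ = |(star V * C * V) i i| := by rw [hCVdiag i]
      _ ≤ N i i := abs_le.2 ⟨by linarith [hN2 i], hN1 i⟩
  calc frobSq D = ∑ i, lam i ^ 2 := hfrob
    _ ≤ ∑ i, N i i := Finset.sum_le_sum (fun i _ => key i)
    _ = N.trace := rfl
    _ = absC.trace := trace_conj V absC hVV
    _ = nuclearNorm C := hnuc.symm
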